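/- Let k, ℓ ≥ 2 be multiplicatively independent integers and let b₁ < b₂ be positive rationals. Then there exist infinitely many pairs (s,t) ∈ ℕ² with b₁ < k^s/ℓ^t < b₂. -/

import Mathlib

/-- Walk lemma: starting at or below `c` and stepping up by `g < d - c`, the first time we
exceed `c` we land in `(c, d)`. -/
lemma walk_lemma (c d v g : ℝ) (hg : 0 < g) (hgd : g < d - c) (hv : v ≤ c) :
    ∃ m : ℕ, c < v + m * g ∧ v + m * g < d := by
  have hex : ∃ m : ℕ, c < v + m * g := by
    obtain ⟨m, hm⟩ := exists_nat_ge ((c - v) / g + 1)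
    refine ⟨m, ?_⟩
    have h1 : (c - v) / g + 1 ≤ (m : ℝ) := hm
    have h2 : (c - v) / g * g = c - v := div_mul_cancel₀ _ hg.ne'
    nlinarith [h1, h2]
  refine ⟨Nat.find hex, Nat.find_spec hex, ?_⟩
  set m := Nat.find hex with hmdef
  have hm0 : m ≠ 0 := by
    intro h
    have := Nat.find_spec hex
    rw [← hmdef, h] at this
    push_cast at this
    linarith
  have hlt : m - 1 < m := Nat.sub_lt (Nat.pos_of_ne_zero hm0) one_pos
  have hprev : ¬ c < v + ((m - 1 : ℕ) : ℝ) * g := Nat.find_min hex hlt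
  push_neg at hprev
  have hcast : ((m - 1 : ℕ) : ℝ) = (m : ℝ) - 1 := by
    have : 1 ≤ m := Nat.one_le_iff_ne_zero.mpr hm0
    push_cast [Nat.cast_sub this]
    ring
  rw [hcast] at hprev
  nlinarith [hprev]

/-- Small step lemma: there are naturals `σ, τ` with `0 < |σ·α - τ·β| < δ`. -/
lemma small_step (α β δ : ℝ) (hα : 0 < α) (hβ : 0 < β) (hδ : 0 < δ)
    (hne : ∀ σ τ : ℕ, 0 < σ → (σ : ℝ) * α ≠ (τ : ℝ) * β) :
    ∃ σ τ : ℕ, 0 < σ ∧ 0 < |(σ : ℝ) * α - (τ : ℝ) * β| ∧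
      |(σ : ℝ) * α - (τ : ℝ) * β| < δ := by
  set θ : ℝ := α / β with hθ
  have hθpos : 0 < θ := div_pos hα hβ
  obtain ⟨n, hn⟩ := exists_nat_gt (β / δ)
  have hn0 : 0 < n := by
    by_contra h
    push_neg at h
    interval_cases n
    · simp at hn
      nlinarith [div_pos hβ hδ]
  obtain ⟨j, k, hk0, hkn, hjk⟩ := Real.exists_int_int_abs_mul_sub_le θ hn0
  have hkpos : (0 : ℝ) < (k : ℝ) := by exact_mod_cast hk0
  have hj0 : 0 ≤ j := by
    by_contra h
    push_neg at h
    have hj1' : j ≤ -1 := by omega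
    have hj1 : (j : ℝ) ≤ -1 := by exact_mod_cast hj1'
    have h1 : (k : ℝ) * θ - j ≤ 1 / (n + 1) := (abs_le.mp hjk).2
    have h2 : (1 : ℝ) / (n + 1) ≤ 1 := by
      rw [div_le_one (by positivity)]
      have h1n : (1 : ℝ) ≤ (n : ℝ) := by exact_mod_cast hn0
      linarith
    nlinarith [mul_pos hkpos hθpos]
  refine ⟨k.toNat, j.toNat, by omega, ?_, ?_⟩
  · rw [abs_pos]
    intro h
    have hkk : (0 : ℕ) < k.toNat := by omega
    exact hne k.toNat j.toNat hkk (by linarith [sub_eq_zero.mp h])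
  · have hck : ((k.toNat : ℕ) : ℝ) = (k : ℝ) := by exact_mod_cast Int.toNat_of_nonneg hk0.le
    have hcj : ((j.toNat : ℕ) : ℝ) = (j : ℝ) := by exact_mod_cast Int.toNat_of_nonneg hj0
    rw [hck, hcj]
    have hsplit : (k : ℝ) * α - (j : ℝ) * β = β * ((k : ℝ) * θ - j) := by
      field_simp [hθ]
      rw [hθ]
      field_simp
    rw [hsplit, abs_mul, abs_of_pos hβ]
    calc β * |(k : ℝ) * θ - j| ≤ β * (1 / (n + 1)) := by
          exact mul_le_mul_of_nonneg_left hjk hβ.le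
      _ < δ := by
          rw [mul_one_div, div_lt_iff₀ (by positivity)]
          have : β / δ < n := hn
          have := (div_lt_iff₀ hδ).mp hn
          nlinarith

/-- For multiplicatively independent `k, ℓ ≥ 2` and positive rationals `b₁ < b₂`,
there exist infinitely many pairs `(s,t) ∈ ℕ²` with `b₁ < k^s/ℓ^t < b₂`. -/
theorem infinitely_many_ratio_in_interval (k l : ℕ) (hk : 2 ≤ k) (hl : 2 ≤ l)
    (hmi : ∀ s t : ℕ, k ^ s = l ^ t → s = 0 ∧ t = 0)
    (b₁ b₂ : ℚ) (hb₁ : 0 < b₁) (hb : b₁ < b₂) :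
    {p : ℕ × ℕ | (b₁ : ℝ) < (k : ℝ) ^ p.1 / (l : ℝ) ^ p.2 ∧
      (k : ℝ) ^ p.1 / (l : ℝ) ^ p.2 < (b₂ : ℝ)}.Infinite := by
  set α : ℝ := Real.log k with hαdef
  set β : ℝ := Real.log l with hβdef
  set c : ℝ := Real.log b₁ with hcdef
  set d : ℝ := Real.log b₂ with hddef
  have hk1 : (1 : ℝ) < (k : ℝ) := by exact_mod_cast Nat.lt_of_lt_of_le one_lt_two hk
  have hl1 : (1 : ℝ) < (l : ℝ) := by exact_mod_cast Nat.lt_of_lt_of_le one_lt_two hl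
  have hα : 0 < α := Real.log_pos hk1
  have hβ : 0 < β := Real.log_pos hl1
  have hb₁R : (0 : ℝ) < (b₁ : ℝ) := by exact_mod_cast hb₁
  have hb₂R : (0 : ℝ) < (b₂ : ℝ) := lt_trans hb₁R (by exact_mod_cast hb)
  have hcd : c < d := Real.log_lt_log hb₁R (by exact_mod_cast hb)
  have hne : ∀ σ τ : ℕ, 0 < σ → (σ : ℝ) * α ≠ (τ : ℝ) * β := by
    intro σ τ hσ h
    have hlog : Real.log ((k : ℝ) ^ σ) = Real.log ((l : ℝ) ^ τ) := by
      rw [Real.log_pow, Real.log_pow]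
      exact_mod_cast h
    have hpow : ((k : ℝ)) ^ σ = ((l : ℝ)) ^ τ := by
      have h1 : (0 : ℝ) < (k : ℝ) ^ σ := by positivity
      have h2 : (0 : ℝ) < (l : ℝ) ^ τ := by positivity
      rw [← Real.exp_log h1, ← Real.exp_log h2, hlog]
    have hnat : k ^ σ = l ^ τ := by exact_mod_cast hpow
    exact absurd (hmi σ τ hnat).1 (by omega)
  -- membership criterion
  have key : ∀ s t : ℕ, c < (s : ℝ) * α - (t : ℝ) * β → (s : ℝ) * α - (t : ℝ) * β < d →
      (s, t) ∈ {p : ℕ × ℕ | (b₁ : ℝ) < (k : ℝ) ^ p.1 / (l : ℝ) ^ p.2 ∧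
        (k : ℝ) ^ p.1 / (l : ℝ) ^ p.2 < (b₂ : ℝ)} := by
    intro s t h1 h2
    have hx : (0 : ℝ) < (k : ℝ) ^ s / (l : ℝ) ^ t := by positivity
    have hlogx : Real.log ((k : ℝ) ^ s / (l : ℝ) ^ t) = (s : ℝ) * α - (t : ℝ) * β := by
      rw [Real.log_div (by positivity) (by positivity), Real.log_pow, Real.log_pow]
    constructor
    · have := (Real.log_lt_log_iff hb₁R hx).mp (by rw [hlogx]; exact h1)
      exact this
    · have := (Real.log_lt_log_iff hx hb₂R).mp (by rw [hlogx]; exact h2)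
      exact this
  -- main claim: solutions with both coordinates ≥ n
  have main : ∀ n : ℕ, ∃ p : ℕ × ℕ, p ∈ {p : ℕ × ℕ |
      (b₁ : ℝ) < (k : ℝ) ^ p.1 / (l : ℝ) ^ p.2 ∧
      (k : ℝ) ^ p.1 / (l : ℝ) ^ p.2 < (b₂ : ℝ)} ∧ n ≤ p.1 ∧ n ≤ p.2 := by
    intro n
    obtain ⟨σ, τ, hσ, hgpos, hgδ⟩ := small_step α β (d - c) hα hβ (by linarith) hne
    set g : ℝ := (σ : ℝ) * α - (τ : ℝ) * β with hgdef
    rcases (abs_pos.mp hgpos).lt_or_gt with hgneg | hgposs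
    · -- g < 0 : walk down from above d
      have habs : |g| = -g := abs_of_neg hgneg
      rw [habs] at hgδ
      obtain ⟨M, hM⟩ := exists_nat_ge ((d + (n : ℝ) * β) / α)
      have hMα : d + (n : ℝ) * β ≤ (M : ℝ) * α := by
        rw [div_le_iff₀ hα] at hM
        linarith
      have hstart : -(((n + M : ℕ) : ℝ) * α - (n : ℝ) * β) ≤ -d := by
        push_cast
        nlinarith [mul_nonneg (Nat.cast_nonneg (α := ℝ) n) hα.le]
      obtain ⟨m, hm1, hm2⟩ := walk_lemma (-d) (-c) (-(((n + M : ℕ) : ℝ) * α - (n : ℝ) * β))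
        (-g) (by linarith) (by linarith) hstart
      refine ⟨(n + M + m * σ, n + m * τ), ?_, by omega, by omega⟩
      rw [hgdef] at hm1 hm2
      apply key
      · push_cast at hm1 hm2 ⊢
        linarith
      · push_cast at hm1 hm2 ⊢
        linarith
    · -- g > 0 : walk up from below c
      have habs : |g| = g := abs_of_pos hgposs
      rw [habs] at hgδ
      obtain ⟨M, hM⟩ := exists_nat_ge (((n : ℝ) * α - c) / β)
      have hMβ : (n : ℝ) * α - c ≤ (M : ℝ) * β := by
        rw [div_le_iff₀ hβ] at hM
        linarith
      have hstart : (n : ℝ) * α - ((n + M : ℕ) : ℝ) * β ≤ c := by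
        push_cast
        nlinarith [mul_nonneg (Nat.cast_nonneg (α := ℝ) n) hβ.le]
      obtain ⟨m, hm1, hm2⟩ := walk_lemma c d ((n : ℝ) * α - ((n + M : ℕ) : ℝ) * β) g
        hgposs (by linarith) hstart
      refine ⟨(n + m * σ, n + M + m * τ), ?_, by omega, by omega⟩
      rw [hgdef] at hm1 hm2
      apply key
      · push_cast at hm1 hm2 ⊢
        linarith
      · push_cast at hm1 hm2 ⊢
        linarith
  -- conclude infinitude
  intro hfin
  have himg : ((Prod.fst '' {p : ℕ × ℕ | (b₁ : ℝ) < (k : ℝ) ^ p.1 / (l : ℝ) ^ p.2 ∧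
      (k : ℝ) ^ p.1 / (l : ℝ) ^ p.2 < (b₂ : ℝ)})).Finite := hfin.image _
  obtain ⟨B, hB⟩ := himg.bddAbove
  obtain ⟨p, hp, hp1, _⟩ := main (B + 1)
  have : p.1 ≤ B := hB ⟨p, hp, rfl⟩
  omega
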